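/- Let R be a Markov transition kernel on a measurable state space S satisfying the Doeblin condition: there exist a constant c ∈ (0,1] and a probability measure μ on S such that R(a, B) ≥ c·μ(B) for every a ∈ S and every measurable B. Then R admits a unique invariant probability measure ν, and sup_{a ∈ S} ||R^m(a, ·) − ν(·)||_var ≤ (1-c)^m for all m ≥ 0, where ||·||_var denotes total variation distance. -/

import Mathlib

open MeasureTheory ProbabilityTheory

noncomputable section

/-- Iterates of a Markov kernel: `kpow R m` is the `m`-step kernel `R^m`. -/
def kpow {S : Type*} [MeasurableSpace S] (R : Kernel S S) : ℕ → Kernel S S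
  | 0 => Kernel.id
  | n + 1 => R ∘ₖ kpow R n

namespace DoeblinAux

set_option linter.unusedSectionVars false

variable {S : Type*} [MeasurableSpace S]

instance kpow_markov (R : Kernel S S) [IsMarkovKernel R] (m : ℕ) :
    IsMarkovKernel (kpow R m) := by
  induction m with
  | zero => rw [kpow]; infer_instance
  | succ n ih => rw [kpow]; infer_instance

lemma kpow_succ' (R : Kernel S S) [IsMarkovKernel R] (n : ℕ) :
    kpow R (n + 1) = kpow R n ∘ₖ R := by
  induction n with
  | zero => show R ∘ₖ Kernel.id = Kernel.id ∘ₖ R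
            rw [Kernel.comp_id, Kernel.id_comp]
  | succ n ih =>
      show R ∘ₖ kpow R (n+1) = kpow R (n+1) ∘ₖ R
      conv_lhs => rw [ih]
      rw [← Kernel.comp_assoc]
      rfl

lemma bind_kpow_zero (R : Kernel S S) (ρ : Measure S) : ρ.bind (kpow R 0) = ρ := by
  have h : ⇑(kpow R 0) = Measure.dirac := by
    funext a; show Kernel.id a = _; rw [Kernel.id_apply]
  rw [h, Measure.bind_dirac]

lemma bind_kpow_succ (R : Kernel S S) [IsMarkovKernel R] (ρ : Measure S) (n : ℕ) :
    ρ.bind (kpow R (n + 1)) = (ρ.bind R).bind (kpow R n) := by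
  rw [Measure.bind_bind (Kernel.measurable R).aemeasurable (Kernel.measurable _).aemeasurable]
  have h : ⇑(kpow R (n+1)) = fun a => (R a).bind (kpow R n) := by
    funext a; rw [kpow_succ', Kernel.comp_apply]
  rw [h]

/-- The residual transition in the Doeblin decomposition `R a = c•μ + (1-c)•q a`. -/
def q (R : Kernel S S) (c : ℝ) (μ : Measure S) (a : S) : Measure S :=
  (1 - ENNReal.ofReal c)⁻¹ • (R a - ENNReal.ofReal c • μ)

/-- Iterates of `μ` under `q`. -/
def mk (R : Kernel S S) (c : ℝ) (μ : Measure S) : ℕ → Measure S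
  | 0 => μ
  | k + 1 => (mk R c μ k).bind (q R c μ)

/-- The candidate invariant measure. -/
def nu (R : Kernel S S) (c : ℝ) (μ : Measure S) : Measure S :=
  Measure.sum fun k => (ENNReal.ofReal c * (1 - ENNReal.ofReal c) ^ k) • mk R c μ k

lemma one_sub_eq {c : ℝ} (hc0 : 0 ≤ c) :
    (1 : ENNReal) - ENNReal.ofReal c = ENNReal.ofReal (1 - c) := by
  rw [ENNReal.ofReal_sub _ hc0, ENNReal.ofReal_one]

lemma bind_smul_add_apply (x y : ENNReal) (μ₁ μ₂ : Measure S) (f : S → Measure S)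
    (hf : Measurable f) {B : Set S} (hB : MeasurableSet B) :
    ((x • μ₁ + y • μ₂).bind f) B = x * (μ₁.bind f) B + y * (μ₂.bind f) B := by
  rw [Measure.bind_apply hB hf.aemeasurable, Measure.bind_apply hB hf.aemeasurable, Measure.bind_apply hB hf.aemeasurable,
    lintegral_add_measure, lintegral_smul_measure, lintegral_smul_measure, smul_eq_mul, smul_eq_mul]

lemma bind_kernel_prob (κ : Kernel S S) [IsMarkovKernel κ] (ρ : Measure S)
    [IsProbabilityMeasure ρ] : IsProbabilityMeasure (ρ.bind κ) := by
  constructor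
  rw [Measure.bind_apply MeasurableSet.univ (Kernel.measurable κ).aemeasurable]
  simp

variable (R : Kernel S S) [IsMarkovKernel R] (c : ℝ) (μ : Measure S) [IsProbabilityMeasure μ]

lemma mk_succ (k : ℕ) : mk R c μ (k + 1) = (mk R c μ k).bind (q R c μ) := by rw [mk]

lemma smul_fin : IsFiniteMeasure (ENNReal.ofReal c • μ) :=
  ⟨by rw [Measure.smul_apply, smul_eq_mul, measure_univ, mul_one]; exact ENNReal.ofReal_lt_top⟩

variable (hDoeblin : ∀ a : S, ∀ B : Set S, MeasurableSet B →
      ENNReal.ofReal c * μ B ≤ R a B)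

include hDoeblin

lemma hle (a : S) : ENNReal.ofReal c • μ ≤ R a := by
  rw [Measure.le_iff]
  intro B hB
  rw [Measure.smul_apply, smul_eq_mul]
  exact hDoeblin a B hB

lemma q_apply (a : S) {B : Set S} (hB : MeasurableSet B) :
    q R c μ a B = (1 - ENNReal.ofReal c)⁻¹ * (R a B - ENNReal.ofReal c * μ B) := by
  haveI := smul_fin c μ
  rw [q, Measure.smul_apply, smul_eq_mul,
    Measure.sub_apply hB (hle R c μ hDoeblin a), Measure.smul_apply, smul_eq_mul]

lemma measurable_q : Measurable (q R c μ) := by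
  apply Measure.measurable_of_measurable_coe
  intro B hB
  simp_rw [q_apply R c μ hDoeblin _ hB]
  exact (((Kernel.measurable_coe R hB).sub measurable_const).const_mul _)

variable (hc0 : 0 < c) (hclt : c < 1)
include hclt

lemma one_sub_ne_zero : (1 : ENNReal) - ENNReal.ofReal c ≠ 0 := by
  simp only [ne_eq, tsub_eq_zero_iff_le, not_le]
  exact ENNReal.ofReal_lt_one.2 hclt

lemma decomp (a : S) {B : Set S} (hB : MeasurableSet B) :
    R a B = ENNReal.ofReal c * μ B + (1 - ENNReal.ofReal c) * q R c μ a B := by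
  rw [q_apply R c μ hDoeblin a hB,
    ← mul_assoc, ENNReal.mul_inv_cancel (one_sub_ne_zero R c μ hDoeblin hclt) (by finiteness),
    one_mul, add_tsub_cancel_of_le (hDoeblin a B hB)]

lemma q_univ (a : S) : q R c μ a Set.univ = 1 := by
  rw [q_apply R c μ hDoeblin a MeasurableSet.univ, measure_univ, measure_univ, mul_one,
    ENNReal.inv_mul_cancel (one_sub_ne_zero R c μ hDoeblin hclt) (by finiteness)]

lemma bind_q_prob (ρ : Measure S) [IsProbabilityMeasure ρ] :
    IsProbabilityMeasure (ρ.bind (q R c μ)) := by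
  constructor
  rw [Measure.bind_apply MeasurableSet.univ (measurable_q R c μ hDoeblin).aemeasurable]
  simp [q_univ R c μ hDoeblin hclt]

lemma mk_prob (k : ℕ) : IsProbabilityMeasure (mk R c μ k) := by
  induction k with
  | zero => rw [mk]; infer_instance
  | succ n ih => rw [mk]; exact bind_q_prob R c μ hDoeblin hclt _

lemma decomp_bind (ρ : Measure S) [IsProbabilityMeasure ρ] :
    ρ.bind R = ENNReal.ofReal c • μ + (1 - ENNReal.ofReal c) • ρ.bind (q R c μ) := by
  ext B hB
  rw [Measure.bind_apply hB (Kernel.measurable R).aemeasurable,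
    lintegral_congr (fun a => decomp R c μ hDoeblin hclt a hB)]
  have hm : Measurable fun a => q R c μ a B :=
    (Measure.measurable_coe hB).comp (measurable_q R c μ hDoeblin)
  rw [lintegral_add_left measurable_const, lintegral_const, measure_univ, mul_one,
    lintegral_const_mul _ hm]
  rw [Measure.add_apply, Measure.smul_apply, Measure.smul_apply, smul_eq_mul, smul_eq_mul,
    Measure.bind_apply hB (measurable_q R c μ hDoeblin).aemeasurable]

lemma contraction : ∀ m : ℕ, ∀ ρ ρ' : Measure S, IsProbabilityMeasure ρ →
    IsProbabilityMeasure ρ' → ∀ B : Set S, MeasurableSet B →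
    (ρ.bind (kpow R m)) B ≤ (ρ'.bind (kpow R m)) B + (1 - ENNReal.ofReal c) ^ m := by
  intro m
  induction m with
  | zero =>
    intro ρ ρ' hρ hρ' B hB
    rw [bind_kpow_zero, bind_kpow_zero, pow_zero]
    calc ρ B ≤ 1 := prob_le_one
      _ ≤ ρ' B + 1 := le_add_self
  | succ n ih =>
    intro ρ ρ' hρ hρ' B hB
    haveI := bind_q_prob R c μ hDoeblin hclt ρ
    haveI := bind_q_prob R c μ hDoeblin hclt ρ'
    rw [bind_kpow_succ, bind_kpow_succ, decomp_bind R c μ hDoeblin hclt ρ,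
      decomp_bind R c μ hDoeblin hclt ρ',
      bind_smul_add_apply _ _ _ _ _ (Kernel.measurable _) hB,
      bind_smul_add_apply _ _ _ _ _ (Kernel.measurable _) hB]
    have h := ih (ρ.bind (q R c μ)) (ρ'.bind (q R c μ)) inferInstance inferInstance B hB
    calc ENNReal.ofReal c * ((μ.bind (kpow R n)) B)
          + (1 - ENNReal.ofReal c) * (((ρ.bind (q R c μ)).bind (kpow R n)) B)
        ≤ ENNReal.ofReal c * ((μ.bind (kpow R n)) B)
          + (1 - ENNReal.ofReal c) * ((((ρ'.bind (q R c μ)).bind (kpow R n)) B)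
            + (1 - ENNReal.ofReal c) ^ n) :=
          add_le_add_right (mul_le_mul_right h _) _
      _ = ENNReal.ofReal c * ((μ.bind (kpow R n)) B)
          + (1 - ENNReal.ofReal c) * (((ρ'.bind (q R c μ)).bind (kpow R n)) B)
          + (1 - ENNReal.ofReal c) ^ (n + 1) := by ring

lemma nu_apply {B : Set S} (hB : MeasurableSet B) :
    nu R c μ B = ∑' k, ENNReal.ofReal c * (1 - ENNReal.ofReal c) ^ k * mk R c μ k B := by
  rw [nu, Measure.sum_apply _ hB]
  simp [Measure.smul_apply, smul_eq_mul]

include hc0 in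
lemma nu_prob : IsProbabilityMeasure (nu R c μ) := by
  constructor
  rw [nu_apply R c μ hDoeblin hclt MeasurableSet.univ]
  have h1 : ∀ k, mk R c μ k Set.univ = 1 := fun k => (mk_prob R c μ hDoeblin hclt k).measure_univ
  simp_rw [h1, mul_one]
  rw [ENNReal.tsum_mul_left, ENNReal.tsum_geometric,
    ENNReal.sub_sub_cancel ENNReal.one_ne_top (le_of_lt (ENNReal.ofReal_lt_one.2 hclt)),
    ENNReal.mul_inv_cancel (by simpa using hc0) ENNReal.ofReal_ne_top]

lemma bind_q_nu_apply {B : Set S} (hB : MeasurableSet B) :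
    ((nu R c μ).bind (q R c μ)) B
      = ∑' k, ENNReal.ofReal c * (1 - ENNReal.ofReal c) ^ k * mk R c μ (k + 1) B := by
  rw [Measure.bind_apply hB (measurable_q R c μ hDoeblin).aemeasurable, nu, lintegral_sum_measure]
  congr 1
  funext k
  rw [lintegral_smul_measure]
  congr 1
  rw [mk_succ, Measure.bind_apply hB (measurable_q R c μ hDoeblin).aemeasurable]

include hc0 in
lemma nu_invariant : (nu R c μ).bind R = nu R c μ := by
  haveI := nu_prob R c μ hDoeblin hc0 hclt
  ext B hB
  rw [decomp_bind R c μ hDoeblin hclt (nu R c μ), Measure.add_apply,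
    Measure.smul_apply, Measure.smul_apply, smul_eq_mul, smul_eq_mul,
    bind_q_nu_apply R c μ hDoeblin hclt hB, nu_apply R c μ hDoeblin hclt hB]
  conv_rhs => rw [tsum_eq_zero_add' ENNReal.summable]
  simp only [pow_zero, mul_one]
  rw [show (mk R c μ 0 : Measure S) = μ from rfl, ← ENNReal.tsum_mul_left]
  congr 1
  refine tsum_congr fun k => ?_
  ring

include hc0 in
lemma nu_kpow_invariant (m : ℕ) : (nu R c μ).bind (kpow R m) = nu R c μ := by
  induction m with
  | zero => exact bind_kpow_zero R _
  | succ n ih => rw [bind_kpow_succ, nu_invariant R c μ hDoeblin hc0 hclt, ih]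

include hc0 in
lemma bound_general (ρ : Measure S) [IsProbabilityMeasure ρ] (m : ℕ) {B : Set S}
    (hB : MeasurableSet B) :
    |((ρ.bind (kpow R m)) B).toReal - (nu R c μ B).toReal| ≤ (1 - c) ^ m := by
  haveI := nu_prob R c μ hDoeblin hc0 hclt
  have h1 := contraction R c μ hDoeblin hclt m ρ (nu R c μ) inferInstance inferInstance B hB
  have h2 := contraction R c μ hDoeblin hclt m (nu R c μ) ρ inferInstance inferInstance B hB
  rw [nu_kpow_invariant R c μ hDoeblin hc0 hclt] at h1 h2
  have hd : (1 - ENNReal.ofReal c) ^ m = ENNReal.ofReal ((1 - c) ^ m) := by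
    rw [one_sub_eq (le_of_lt hc0), ← ENNReal.ofReal_pow (by linarith)]
  rw [hd] at h1 h2
  haveI := bind_kernel_prob (kpow R m) ρ
  have hx : (ρ.bind (kpow R m)) B ≠ ⊤ := measure_ne_top _ _
  have hy : nu R c μ B ≠ ⊤ := measure_ne_top _ _
  have hpow : (0:ℝ) ≤ (1 - c) ^ m := pow_nonneg (by linarith) m
  rw [abs_sub_le_iff]
  constructor
  · have := ENNReal.toReal_mono (ENNReal.add_ne_top.2 ⟨hy, ENNReal.ofReal_ne_top⟩) h1
    rw [ENNReal.toReal_add hy ENNReal.ofReal_ne_top, ENNReal.toReal_ofReal hpow] at this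
    linarith
  · have := ENNReal.toReal_mono (ENNReal.add_ne_top.2 ⟨hx, ENNReal.ofReal_ne_top⟩) h2
    rw [ENNReal.toReal_add hx ENNReal.ofReal_ne_top, ENNReal.toReal_ofReal hpow] at this
    linarith

include hc0 in
theorem doeblin_main :
    ∃ ν : Measure S, IsProbabilityMeasure ν ∧ ν.bind (fun a => R a) = ν ∧
      (∀ ν' : Measure S, IsProbabilityMeasure ν' →
        ν'.bind (fun a => R a) = ν' → ν' = ν) ∧
      ∀ m : ℕ, ∀ a : S, ∀ B : Set S, MeasurableSet B →
        |((kpow R m) a B).toReal - (ν B).toReal| ≤ (1 - c) ^ m := by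
  haveI := nu_prob R c μ hDoeblin hc0 hclt
  refine ⟨nu R c μ, inferInstance, nu_invariant R c μ hDoeblin hc0 hclt, ?_, ?_⟩
  · intro ν' hν' hinv
    haveI := hν'
    have hkp : ∀ m, ν'.bind (kpow R m) = ν' := by
      intro m
      induction m with
      | zero => exact bind_kpow_zero R ν'
      | succ n ih => rw [bind_kpow_succ]; rw [show ν'.bind ⇑R = ν' from hinv, ih]
    ext B hB
    have hb : ∀ m : ℕ, |(ν' B).toReal - (nu R c μ B).toReal| ≤ (1 - c) ^ m := by
      intro m
      have := bound_general R c μ hDoeblin hc0 hclt ν' m hB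
      rwa [hkp m] at this
    have h0 : |(ν' B).toReal - (nu R c μ B).toReal| ≤ 0 :=
      ge_of_tendsto' (tendsto_pow_atTop_nhds_zero_of_lt_one (by linarith) (by linarith)) hb
    have heq : (ν' B).toReal = (nu R c μ B).toReal := by
      have := abs_nonneg ((ν' B).toReal - (nu R c μ B).toReal)
      have : |(ν' B).toReal - (nu R c μ B).toReal| = 0 := le_antisymm h0 this
      have := abs_eq_zero.1 this
      linarith
    exact (ENNReal.toReal_eq_toReal_iff' (measure_ne_top _ _) (measure_ne_top _ _)).1 heq
  · intro m a B hB
    have := bound_general R c μ hDoeblin hc0 hclt (Measure.dirac a) m hB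
    rwa [Measure.dirac_bind (Kernel.measurable _) a] at this

end DoeblinAux

theorem stmt6 {S : Type*} [MeasurableSpace S]
    (R : Kernel S S) [IsMarkovKernel R]
    (c : ℝ) (hc0 : 0 < c) (hc1 : c ≤ 1)
    (μ : Measure S) [IsProbabilityMeasure μ]
    (hDoeblin : ∀ a : S, ∀ B : Set S, MeasurableSet B →
      ENNReal.ofReal c * μ B ≤ R a B) :
    ∃ ν : Measure S, IsProbabilityMeasure ν ∧ ν.bind (fun a => R a) = ν ∧
      (∀ ν' : Measure S, IsProbabilityMeasure ν' →
        ν'.bind (fun a => R a) = ν' → ν' = ν) ∧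
      ∀ m : ℕ, ∀ a : S, ∀ B : Set S, MeasurableSet B →
        |((kpow R m) a B).toReal - (ν B).toReal| ≤ (1 - c) ^ m := by
  rcases lt_or_eq_of_le hc1 with hclt | hceq
  · exact DoeblinAux.doeblin_main R c μ hDoeblin hc0 hclt
  · subst hceq
    have hRa : ∀ a, R a = μ := by
      intro a
      have hμle : ∀ B : Set S, MeasurableSet B → μ B ≤ R a B := by
        intro B hB
        have := hDoeblin a B hB
        simpa [ENNReal.ofReal_one] using this
      ext B hB
      refine le_antisymm ?_ (hμle B hB)
      have h1 : R a B + R a Bᶜ = 1 := by rw [measure_add_measure_compl hB, measure_univ]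
      have h2 : μ B + μ Bᶜ = 1 := by rw [measure_add_measure_compl hB, measure_univ]
      have h3 := hμle Bᶜ hB.compl
      calc R a B = 1 - R a Bᶜ := by
            rw [← h1, ENNReal.add_sub_cancel_right (measure_ne_top _ _)]
        _ ≤ 1 - μ Bᶜ := tsub_le_tsub_left h3 1
        _ = μ B := by rw [← h2, ENNReal.add_sub_cancel_right (measure_ne_top _ _)]
    have hμinv : μ.bind (fun a => R a) = μ := by
      have hfn : (fun a : S => R a) = fun _ => μ := funext hRa
      rw [hfn, Measure.bind_const, measure_univ, one_smul]
    have hD2 : ∀ a : S, ∀ B : Set S, MeasurableSet B →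
        ENNReal.ofReal (1/2 : ℝ) * μ B ≤ R a B := by
      intro a B hB
      refine le_trans (mul_le_mul_left ?_ _) (hDoeblin a B hB)
      exact ENNReal.ofReal_le_ofReal (by norm_num)
    obtain ⟨ν, hprob, hinv, huniq, _⟩ :=
      DoeblinAux.doeblin_main R (1/2 : ℝ) μ hD2 (by norm_num) (by norm_num)
    have hνμ : μ = ν := huniq μ inferInstance hμinv
    haveI := hprob
    refine ⟨ν, hprob, hinv, huniq, ?_⟩
    intro m a B hB
    cases m with
    | zero =>
      have hx : ((kpow R 0) a B).toReal ≤ 1 := by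
        have h := prob_le_one (μ := (kpow R 0) a) (s := B)
        simpa using ENNReal.toReal_mono ENNReal.one_ne_top h
      have hy : (ν B).toReal ≤ 1 := by
        have h := prob_le_one (μ := ν) (s := B)
        simpa using ENNReal.toReal_mono ENNReal.one_ne_top h
      have hx0 : 0 ≤ ((kpow R 0) a B).toReal := ENNReal.toReal_nonneg
      have hy0 : 0 ≤ (ν B).toReal := ENNReal.toReal_nonneg
      have hpow : ((1:ℝ) - 1) ^ (0:ℕ) = 1 := by norm_num
      rw [hpow, abs_sub_le_iff]
      constructor <;> linarith
    | succ n =>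
      have hk : (kpow R (n+1)) a = μ := by
        have h1 : (kpow R (n+1)) a = (kpow R n a).bind R := by
          rw [kpow, Kernel.comp_apply]
        rw [h1, show (⇑R : S → Measure S) = fun _ => μ from funext hRa,
          Measure.bind_const, measure_univ, one_smul]
      rw [hk, ← hνμ]
      simp

end
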